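/- If M is a dense linear order and I ⊆ M is a dense subset (i.e., for every x < y in M there is z ∈ I with x < z < y), then I can be partitioned into two sets J₁ and J₂, each of which is dense in M. -/

import Mathlib

open Set Cardinal

/-- System of distinct representatives: if each set `s i` has cardinality at least `κ`
and there are at most `κ` indices, we can injectively choose an element from each set. -/
lemma exists_injective_choice {α ι : Type} (s : ι → Set α) (κ : Cardinal)
    (hι : #ι ≤ κ) (hs : ∀ i, κ ≤ #(s i)) :
    ∃ f : ι → α, Function.Injective f ∧ ∀ i, f i ∈ s i := by
  classical
  obtain ⟨e⟩ : Nonempty (ι ↪ κ.ord.ToType) := by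
    rw [← Cardinal.le_def, Cardinal.mk_ord_toType]; exact hι
  set r : ι → ι → Prop := fun i j => e i < e j with hr
  have wf : WellFounded r := InvImage.wf e (wellFounded_lt)
  have key : ∀ (i : ι) (g : ∀ j, r j i → α),
      (s i \ {x | ∃ j hj, g j hj = x}).Nonempty := by
    intro i g
    rw [Set.nonempty_iff_ne_empty]
    intro hemp
    have hsub : s i ⊆ {x | ∃ j hj, g j hj = x} := by
      intro x hx
      by_contra hx'
      exact Set.eq_empty_iff_forall_notMem.mp hemp x ⟨hx, hx'⟩
    have h1 : #(s i) ≤ #{j // r j i} := by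
      have : #(s i) ≤ #{x | ∃ j hj, g j hj = x} := Cardinal.mk_le_mk_of_subset hsub
      refine this.trans ?_
      have : {x | ∃ j hj, g j hj = x} ⊆ Set.range (fun p : {j // r j i} => g p.1 p.2) := by
        rintro x ⟨j, hj, rfl⟩; exact ⟨⟨j, hj⟩, rfl⟩
      exact (Cardinal.mk_le_mk_of_subset this).trans Cardinal.mk_range_le
    have h2 : #{j // r j i} ≤ #(Set.Iio (e i)) := by
      refine Cardinal.mk_le_of_injective (f := fun p : {j // r j i} => (⟨e p.1, p.2⟩ : Set.Iio (e i))) ?_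
      rintro ⟨j₁, h₁⟩ ⟨j₂, h₂⟩ hh
      simp only [Subtype.mk.injEq] at hh ⊢
      exact e.injective (congrArg Subtype.val hh)
    have h3 : #(Set.Iio (e i)) < κ := Cardinal.mk_Iio_ord_toType (e i)
    exact absurd ((hs i).trans (h1.trans h2)) (not_le.mpr h3)
  let F : ∀ i : ι, (∀ j, r j i → α) → α := fun i g => (key i g).some
  let f : ι → α := wf.fix F
  have hfeq : ∀ i, f i = F i (fun j _ => f j) := fun i => wf.fix_eq F i
  have hmem : ∀ i, f i ∈ s i \ {x | ∃ j, ∃ _ : r j i, f j = x} := by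
    intro i
    have h := (key i (fun j _ => f j)).some_mem
    rw [hfeq i]
    exact h
  refine ⟨f, ?_, fun i => (hmem i).1⟩
  intro i j hij
  by_contra hne
  have : e i ≠ e j := fun h => hne (e.injective h)
  rcases this.lt_or_gt with h | h
  · exact (hmem j).2 ⟨i, h, hij⟩
  · exact (hmem i).2 ⟨j, h, hij.symm⟩

/-- (Shelah, proof of Thm 6.2, part (2)(*).) If `M` is a dense linear order and `I ⊆ M`
is a dense subset, then `I` can be partitioned into two sets `J₁`, `J₂`, each dense in `M`. -/
theorem dense_subset_partition_two_dense
    (M : Type) [LinearOrder M] [DenselyOrdered M] (I : Set M)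
    (hI : ∀ x y : M, x < y → ∃ z ∈ I, x < z ∧ z < y) :
    ∃ J₁ J₂ : Set M, I = J₁ ∪ J₂ ∧ J₁ ∩ J₂ = ∅ ∧
      (∀ x y : M, x < y → ∃ z ∈ J₁, x < z ∧ z < y) ∧
      (∀ x y : M, x < y → ∃ z ∈ J₂, x < z ∧ z < y) := by
  classical
  set κ : M → M → Cardinal := fun a b => #(↥(I ∩ Set.Ioo a b)) with hκdef
  -- two points in any interval
  have two : ∀ x y : M, x < y → ∃ z₁ z₂ : M, z₁ ∈ I ∧ z₂ ∈ I ∧ x < z₁ ∧ z₁ < z₂ ∧ z₂ < y := by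
    intro x y h
    obtain ⟨z₂, hz₂, h1, h2⟩ := hI x y h
    obtain ⟨z₁, hz₁, g1, g2⟩ := hI x z₂ h1
    exact ⟨z₁, z₂, hz₁, hz₂, g1, g2, h2⟩
  -- traces are infinite
  have hinf : ∀ x y : M, x < y → (I ∩ Set.Ioo x y).Infinite := by
    intro x y h
    by_contra hni
    have hfin := Set.not_infinite.mp hni
    obtain ⟨z, hz, h1, h2⟩ := hI x y h
    obtain ⟨m, hm, hmin⟩ := Set.exists_min_image _ id hfin ⟨z, hz, h1, h2⟩
    obtain ⟨w, hw, hw1, hw2⟩ := hI x m hm.2.1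
    exact absurd (hmin w ⟨hw, hw1, hw2.trans hm.2.2⟩) (not_le.mpr hw2)
  have haleph : ∀ x y : M, x < y → ℵ₀ ≤ κ x y := by
    intro x y h
    exact Cardinal.infinite_iff.mp (Set.infinite_coe_iff.mpr (hinf x y h))
  have κmono : ∀ p q u v : M, u ≤ p → q ≤ v → κ p q ≤ κ u v := by
    intro p q u v h1 h2
    exact Cardinal.mk_le_mk_of_subset
      (Set.inter_subset_inter subset_rfl (Set.Ioo_subset_Ioo h1 h2))
  -- homogeneous subintervals exist
  have homog : ∀ x y : M, x < y → ∃ u v : M, x ≤ u ∧ v ≤ y ∧ u < v ∧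
      ∀ p q : M, u ≤ p → q ≤ v → p < q → κ p q = κ u v := by
    intro x y hxy
    have hS : {c : Cardinal | ∃ u v : M, x ≤ u ∧ v ≤ y ∧ u < v ∧ κ u v = c}.Nonempty :=
      ⟨κ x y, x, y, le_rfl, le_rfl, hxy, rfl⟩
    obtain ⟨c, hc, hmin⟩ := Cardinal.lt_wf.has_min _ hS
    obtain ⟨u, v, hxu, hvy, huv, hcuv⟩ := hc
    refine ⟨u, v, hxu, hvy, huv, fun p q hup hqv hpq => ?_⟩
    have h1 : κ p q ≤ κ u v := κmono p q u v hup hqv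
    have h2 : ¬ κ p q < c := hmin _ ⟨p, q, hxu.trans hup, hqv.trans hvy, hpq, rfl⟩
    exact le_antisymm h1 (by rw [hcuv]; exact not_lt.mp h2)
  -- the Zorn family
  set 𝒮 : Set (Set (M × Bool)) := {J | (∀ z b, (z, b) ∈ J → z ∈ I) ∧
      (∀ z : M, ¬((z, false) ∈ J ∧ (z, true) ∈ J)) ∧
      ∀ p q : M, p < q →
        ((∃ z, z ∈ Set.Ioo p q ∧ (z, false) ∈ J) ↔ (∃ z, z ∈ Set.Ioo p q ∧ (z, true) ∈ J))}
      with h𝒮def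
  have hchainub : ∀ c ⊆ 𝒮, IsChain (· ⊆ ·) c → c.Nonempty →
      ∃ ub ∈ 𝒮, ∀ s ∈ c, s ⊆ ub := by
    intro c hc hchain _
    refine ⟨⋃₀ c, ⟨?_, ?_, ?_⟩, fun s hs => Set.subset_sUnion_of_mem hs⟩
    · rintro z b ⟨J, hJ, hzJ⟩
      exact (hc hJ).1 z b hzJ
    · rintro z ⟨⟨Ja, hJa, hza⟩, ⟨Jb, hJb, hzb⟩⟩
      rcases hchain.total hJa hJb with h | h
      · exact (hc hJb).2.1 z ⟨h hza, hzb⟩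
      · exact (hc hJa).2.1 z ⟨hza, h hzb⟩
    · intro p q hpq
      constructor
      · rintro ⟨z, hz, J, hJ, hzJ⟩
        obtain ⟨z', hz', hz'J⟩ := ((hc hJ).2.2 p q hpq).mp ⟨z, hz, hzJ⟩
        exact ⟨z', hz', J, hJ, hz'J⟩
      · rintro ⟨z, hz, J, hJ, hzJ⟩
        obtain ⟨z', hz', hz'J⟩ := ((hc hJ).2.2 p q hpq).mpr ⟨z, hz, hzJ⟩
        exact ⟨z', hz', J, hJ, hz'J⟩
  have hSempty : (∅ : Set (M × Bool)) ∈ 𝒮 := by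
    refine ⟨by simp, by simp, ?_⟩
    intro p q _
    simp
  obtain ⟨J, -, hJmax⟩ := zorn_subset_nonempty 𝒮 hchainub ∅ hSempty
  have hJ : J ∈ 𝒮 := hJmax.prop
  -- the key density claim
  have dense1 : ∀ x y : M, x < y → ∃ z, z ∈ Set.Ioo x y ∧ (z, false) ∈ J := by
    intro x y hxy
    by_contra hno
    have hno' : ¬ ∃ z, z ∈ Set.Ioo x y ∧ (z, true) ∈ J :=
      fun h => hno ((hJ.2.2 x y hxy).mpr h)
    obtain ⟨z₁, z₂, _, _, hz1, hz12, hz2⟩ := two x y hxy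
    obtain ⟨u, v, hz1u, hvz2, huv, hom⟩ := homog z₁ z₂ hz12
    have hsub : Set.Ioo u v ⊆ Set.Ioo x y :=
      Set.Ioo_subset_Ioo (le_of_lt (lt_of_lt_of_le hz1 hz1u)) (le_of_lt (lt_of_le_of_lt hvz2 hz2))
    -- seed construction on the homogeneous interval (u,v)
    set T : Set M := I ∩ Set.Ioo u v with hTdef
    set ι : Type := {pq : T × T // (pq.1 : M) < (pq.2 : M)} × Bool with hιdef
    set s : ι → Set M := fun i => I ∩ Set.Ioo (i.1.1.1 : M) (i.1.1.2 : M) with hsdef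
    have hcc : ℵ₀ ≤ κ u v := haleph u v huv
    have hs : ∀ i, κ u v ≤ #(s i) := by
      intro i
      have h1 : u ≤ (i.1.1.1 : M) := le_of_lt (i.1.1.1).2.2.1
      have h2 : ((i.1.1.2 : M)) ≤ v := le_of_lt (i.1.1.2).2.2.2
      exact (hom _ _ h1 h2 i.1.2).symm.le
    have hι : #ι ≤ κ u v := by
      have e1 : #ι ≤ #((T × T) × Bool) := by
        refine Cardinal.mk_le_of_injective
          (f := fun i : ι => ((i.1.1 : T × T), i.2)) ?_
        rintro ⟨⟨a, ha⟩, b⟩ ⟨⟨a', ha'⟩, b'⟩ h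
        simp only [Prod.mk.injEq] at h
        simp [h.1, h.2]
      have e2 : #((T × T) × Bool) = κ u v * κ u v * 2 := by
        simp [Cardinal.mk_prod, hTdef, hκdef]
      have e3 : κ u v * κ u v * 2 ≤ κ u v := by
        have h2a : (2 : Cardinal) ≤ ℵ₀ := by
          exact_mod_cast (Cardinal.nat_lt_aleph0 2).le
        have h2c : (2 : Cardinal) ≤ κ u v := le_trans h2a hcc
        calc κ u v * κ u v * 2 = κ u v * 2 := by rw [Cardinal.mul_eq_self hcc]
          _ ≤ κ u v * κ u v := mul_le_mul_right h2c _
          _ = κ u v := Cardinal.mul_eq_self hcc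
      rw [e2] at e1
      exact e1.trans e3
    obtain ⟨f, hfinj, hfmem⟩ := exists_injective_choice s (κ u v) hι hs
    set C₁ : Set M := f '' {i | i.2 = false} with hC₁def
    set C₂ : Set M := f '' {i | i.2 = true} with hC₂def
    have hCT : ∀ i : ι, f i ∈ T := by
      intro i
      have h1 : u ≤ (i.1.1.1 : M) := le_of_lt (i.1.1.1).2.2.1
      have h2 : ((i.1.1.2 : M)) ≤ v := le_of_lt (i.1.1.2).2.2.2
      have := hfmem i
      exact ⟨this.1, Set.Ioo_subset_Ioo h1 h2 this.2⟩
    have hC₁T : C₁ ⊆ T := by rintro z ⟨i, _, rfl⟩; exact hCT i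
    have hC₂T : C₂ ⊆ T := by rintro z ⟨i, _, rfl⟩; exact hCT i
    have hdisj : Disjoint C₁ C₂ := by
      rw [Set.disjoint_left]
      rintro z ⟨i, hi, rfl⟩ ⟨j, hj, hji⟩
      obtain rfl := hfinj hji
      simp only [Set.mem_setOf_eq] at hi hj
      rw [hi] at hj
      exact Bool.false_ne_true hj
    -- both colors meet every interval with endpoints in T
    have meet : ∀ p q : M, p ∈ T → q ∈ T → p < q →
        (C₁ ∩ Set.Ioo p q).Nonempty ∧ (C₂ ∩ Set.Ioo p q).Nonempty := by
      intro p q hp hq hpq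
      refine ⟨⟨f ⟨⟨(⟨p, hp⟩, ⟨q, hq⟩), hpq⟩, false⟩, ⟨_, rfl, rfl⟩,
        (hfmem ⟨⟨(⟨p, hp⟩, ⟨q, hq⟩), hpq⟩, false⟩).2⟩,
        ⟨f ⟨⟨(⟨p, hp⟩, ⟨q, hq⟩), hpq⟩, true⟩, ⟨_, rfl, rfl⟩,
        (hfmem ⟨⟨(⟨p, hp⟩, ⟨q, hq⟩), hpq⟩, true⟩).2⟩⟩
    -- crossing: any interval containing a point of (u,v) meets both colors
    have crossing : ∀ p q z : M, p < z → z < q → u < z → z < v →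
        (C₁ ∩ Set.Ioo p q).Nonempty ∧ (C₂ ∩ Set.Ioo p q).Nonempty := by
      intro p q z hpz hzq huz hzv
      have hp'z : max p u < z := max_lt hpz huz
      have hzq' : z < min q v := lt_min hzq hzv
      obtain ⟨w₁, hw₁I, h1, h2⟩ := hI _ z hp'z
      obtain ⟨w₂, hw₂I, h3, h4⟩ := hI z _ hzq'
      have hw₁T : w₁ ∈ T :=
        ⟨hw₁I, lt_of_le_of_lt (le_max_right p u) h1,
          h2.trans (hzq'.trans_le (min_le_right q v))⟩
      have hw₂T : w₂ ∈ T :=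
        ⟨hw₂I, ((le_max_right p u).trans_lt (hp'z.trans h3)),
          lt_of_lt_of_le h4 (min_le_right q v)⟩
      obtain ⟨m1, m2⟩ := meet w₁ w₂ hw₁T hw₂T (h2.trans h3)
      have hIoo : Set.Ioo w₁ w₂ ⊆ Set.Ioo p q :=
        Set.Ioo_subset_Ioo (le_of_lt ((le_max_left p u).trans_lt h1))
          (le_of_lt (h4.trans_le (min_le_left q v)))
      exact ⟨m1.mono (Set.inter_subset_inter subset_rfl hIoo),
        m2.mono (Set.inter_subset_inter subset_rfl hIoo)⟩
    -- extend J
    set J' : Set (M × Bool) :=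
      J ∪ ((fun z => (z, false)) '' C₁) ∪ ((fun z => (z, true)) '' C₂) with hJ'def
    have memJ' : ∀ z b, (z, b) ∈ J' ↔
        ((z, b) ∈ J ∨ (z ∈ C₁ ∧ b = false) ∨ (z ∈ C₂ ∧ b = true)) := by
      intro z b
      simp only [hJ'def, Set.mem_union, Set.mem_image, Prod.mk.injEq]
      constructor
      · rintro ((h | ⟨w, hw, h1, h2⟩) | ⟨w, hw, h1, h2⟩)
        · exact Or.inl h
        · exact Or.inr (Or.inl ⟨h1 ▸ hw, h2.symm⟩)
        · exact Or.inr (Or.inr ⟨h1 ▸ hw, h2.symm⟩)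
      · rintro (h | ⟨hw, rfl⟩ | ⟨hw, rfl⟩)
        · exact Or.inl (Or.inl h)
        · exact Or.inl (Or.inr ⟨z, hw, rfl, rfl⟩)
        · exact Or.inr ⟨z, hw, rfl, rfl⟩
    have hJ'S : J' ∈ 𝒮 := by
      refine ⟨?_, ?_, ?_⟩
      · intro z b hzb
        rcases (memJ' z b).mp hzb with h | ⟨h, _⟩ | ⟨h, _⟩
        · exact hJ.1 z b h
        · exact (hC₁T h).1
        · exact (hC₂T h).1
      · intro z ⟨hf, ht⟩
        rcases (memJ' z false).mp hf with h | ⟨h, _⟩ | ⟨_, h⟩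
        · rcases (memJ' z true).mp ht with h' | ⟨_, h'⟩ | ⟨h', _⟩
          · exact hJ.2.1 z ⟨h, h'⟩
          · exact absurd h' (by simp)
          · exact hno ⟨z, hsub (hC₂T h').2, h⟩
        · rcases (memJ' z true).mp ht with h' | ⟨_, h'⟩ | ⟨h', _⟩
          · exact hno' ⟨z, hsub (hC₁T h).2, h'⟩
          · exact absurd h' (by simp)
          · exact Set.disjoint_left.mp hdisj h h'
        · exact absurd h (by simp)
      · intro p q hpq
        constructor
        · rintro ⟨z, hz, hzJ'⟩
          rcases (memJ' z false).mp hzJ' with h | ⟨h, _⟩ | ⟨_, h⟩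
          · obtain ⟨z', hz', hz'J⟩ := (hJ.2.2 p q hpq).mp ⟨z, hz, h⟩
            exact ⟨z', hz', (memJ' z' true).mpr (Or.inl hz'J)⟩
          · obtain ⟨-, ⟨z', hz'C, hz'⟩⟩ :=
              crossing p q z hz.1 hz.2 (hC₁T h).2.1 (hC₁T h).2.2
            exact ⟨z', hz', (memJ' z' true).mpr (Or.inr (Or.inr ⟨hz'C, rfl⟩))⟩
          · exact absurd h (by simp)
        · rintro ⟨z, hz, hzJ'⟩
          rcases (memJ' z true).mp hzJ' with h | ⟨_, h⟩ | ⟨h, _⟩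
          · obtain ⟨z', hz', hz'J⟩ := (hJ.2.2 p q hpq).mpr ⟨z, hz, h⟩
            exact ⟨z', hz', (memJ' z' false).mpr (Or.inl hz'J)⟩
          · exact absurd h (by simp)
          · obtain ⟨⟨z', hz'C, hz'⟩, -⟩ :=
              crossing p q z hz.1 hz.2 (hC₂T h).2.1 (hC₂T h).2.2
            exact ⟨z', hz', (memJ' z' false).mpr (Or.inr (Or.inl ⟨hz'C, rfl⟩))⟩
    -- get a new point, contradiction with maximality
    have hsubJ : J ⊆ J' := by
      intro a ha
      exact Set.mem_union_left _ (Set.mem_union_left _ ha)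
    have hJ'J : J' ⊆ J := hJmax.2 hJ'S hsubJ
    obtain ⟨c₁, c₂, hc₁I, hc₂I, g1, g2, g3⟩ := two u v huv
    have hc₁T : c₁ ∈ T := ⟨hc₁I, g1, g2.trans g3⟩
    have hc₂T : c₂ ∈ T := ⟨hc₂I, g1.trans g2, g3⟩
    obtain ⟨⟨w, hwC₁, hwIoo⟩, -⟩ := meet c₁ c₂ hc₁T hc₂T g2
    have hwJ : (w, false) ∈ J :=
      hJ'J ((memJ' w false).mpr (Or.inr (Or.inl ⟨hwC₁, rfl⟩)))
    have hwT : w ∈ T := hC₁T hwC₁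
    exact hno ⟨w, hsub hwT.2, hwJ⟩
  have dense2 : ∀ x y : M, x < y → ∃ z, z ∈ Set.Ioo x y ∧ (z, true) ∈ J := by
    intro x y hxy
    exact (hJ.2.2 x y hxy).mp (dense1 x y hxy)
  -- assemble the answer
  refine ⟨{z | (z, false) ∈ J}, I \ {z | (z, false) ∈ J}, ?_, ?_, ?_, ?_⟩
  · ext z
    constructor
    · intro hz
      by_cases h : (z, false) ∈ J
      · exact Or.inl h
      · exact Or.inr ⟨hz, h⟩
    · rintro (h | h)
      · exact hJ.1 z false h
      · exact h.1
  · ext z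
    simp only [Set.mem_inter_iff, Set.mem_setOf_eq, Set.mem_diff, Set.mem_empty_iff_false,
      iff_false]
    rintro ⟨h1, -, h3⟩
    exact h3 h1
  · intro x y hxy
    obtain ⟨z, hz, hzJ⟩ := dense1 x y hxy
    exact ⟨z, hzJ, hz.1, hz.2⟩
  · intro x y hxy
    obtain ⟨z, hz, hzJ⟩ := dense2 x y hxy
    refine ⟨z, ⟨hJ.1 z true hzJ, fun h => hJ.2.1 z ⟨h, hzJ⟩⟩, hz.1, hz.2⟩
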